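/- Let L ∈ K[D] be of order r, P ∈ K[D], q ∈ K with DP = qL. Then q is a rational solution of the adjoint operator L*, i.e., L*·q = 0. -/

import Mathlib

/- Framework: linear differential operators over K = C(x), represented as
   `Polynomial (RatFunc C)` where `X^i` stands for `D^i` (coefficients on the left);
   local (Puiseux/Hahn series) solutions at finite points and at infinity;
   integrality; constants and pseudoconstants of `K[D]/⟨L⟩`. -/

noncomputable section
open Polynomial

variable (C : Type) [Field C] [IsAlgClosed C] [CharZero C]

/-- The derivative d/dx on K = C(x). -/
def KDeriv (r : RatFunc C) : RatFunc C :=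
  (algebraMap (Polynomial C) (RatFunc C) (derivative r.num) * algebraMap _ _ r.denom
    - algebraMap _ _ r.num * algebraMap _ _ (derivative r.denom))
  / (algebraMap (Polynomial C) (RatFunc C) r.denom) ^ 2

/-- Linear differential operators `∑ aᵢ Dⁱ` with `aᵢ ∈ C(x)`, encoded as polynomials
    whose `i`-th coefficient is the coefficient of `Dⁱ`. -/
abbrev DOp := Polynomial (RatFunc C)

/-- Left multiplication by `D` in `K[D]`: `D·(∑ aᵢ Dⁱ) = ∑ aᵢ Dⁱ⁺¹ + ∑ aᵢ' Dⁱ`. -/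
def Dmul (P : DOp C) : DOp C :=
  X * P + P.sum fun i a => Polynomial.C (KDeriv C a) * X ^ i

/-- Multiplication (composition) in the noncommutative ring `K[D]`. -/
def opMul (P Q : DOp C) : DOp C :=
  P.sum fun i a => Polynomial.C a * (Dmul C)^[i] Q

/-- The adjoint `L ↦ L*`: `(∑ aᵢ Dⁱ)* = ∑ (−D)ⁱ aᵢ`. -/
def adjoint (L : DOp C) : DOp C :=
  L.sum fun i a => (-1) ^ i * (Dmul C)^[i] (Polynomial.C a)

/-- Application of an operator to an element of `K` itself (rational solutions). -/
def KApply (L : DOp C) (q : RatFunc C) : RatFunc C :=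
  L.sum fun i a => a * (KDeriv C)^[i] q

/-- `[P]_L` is zero in `K[D]/⟨L⟩`, i.e. `P` is a left multiple of `L`. -/
def IsZeroClass (L P : DOp C) : Prop := ∃ Q : DOp C, P = opMul C Q L

/-- `[P]_L` is a constant of `K[D]/⟨L⟩`, i.e. `D·[P]_L = [0]_L`. -/
def IsConstantClass (L P : DOp C) : Prop := ∃ Q : DOp C, Dmul C P = opMul C Q L

/-- `N = lclm(L, M)`: the monic common left multiple of `L` and `M` of lowest order. -/
def IsLCLM (L M N : DOp C) : Prop :=
  N.Monic ∧ (∃ A, N = opMul C A L) ∧ (∃ B, N = opMul C B M) ∧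
    ∀ N' : DOp C, N'.Monic → (∃ A, N' = opMul C A L) → (∃ B, N' = opMul C B M) →
      N.natDegree ≤ N'.natDegree

/-- A differential field extension of `K = C(x)`. -/
structure DiffExt where
  carrier : Type
  [isField : Field carrier]
  [isAlgK : Algebra (RatFunc C) carrier]
  [isAlgC : Algebra C carrier]
  [isTower : IsScalarTower C (RatFunc C) carrier]
  δ : carrier → carrier
  δ_add : ∀ a b, δ (a + b) = δ a + δ b
  δ_mul : ∀ a b, δ (a * b) = a * δ b + δ a * b
  δ_algebraMap : ∀ r : RatFunc C,
    δ (algebraMap (RatFunc C) carrier r) = algebraMap (RatFunc C) carrier (KDeriv C r)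

attribute [instance] DiffExt.isField DiffExt.isAlgK DiffExt.isAlgC DiffExt.isTower

/-- Application of an operator `L = ∑ aᵢ Dⁱ` to an element of a differential extension. -/
def DiffExt.apply (F : DiffExt C) (L : DOp C) (f : F.carrier) : F.carrier :=
  L.sum fun i a => algebraMap (RatFunc C) F.carrier a * F.δ^[i] f

/-- Formal derivative `d/dt` on generalized (Hahn/Puiseux) series with rational exponents. -/
def hderiv (f : HahnSeries ℚ C) : HahnSeries ℚ C :=
  HahnSeries.embDomain (OrderIso.addRight (-1 : ℚ)).toOrderEmbedding
    { coeff := fun γ => γ • f.coeff γ,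
      isPWO_support' := f.isPWO_support.mono (by
        intro γ hγ
        simp only [Function.mem_support, ne_eq] at hγ ⊢
        intro hc
        exact hγ (by rw [hc, smul_zero]) ) }

/-- The derivation `d/dx = -t² d/dt` on series at infinity, in the local coordinate `t = 1/x`. -/
def dinf (f : HahnSeries ℚ C) : HahnSeries ℚ C :=
  -(HahnSeries.single (2 : ℚ) (1 : C) * hderiv C f)

/-- `ι` is a series expansion of `C(x)` (at a finite point for `δ = hderiv`, at infinity
    for `δ = dinf`), i.e. a ring embedding compatible with differentiation. -/
def IsExpansion (δ : HahnSeries ℚ C → HahnSeries ℚ C)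
    (ι : RatFunc C →+* HahnSeries ℚ C) : Prop :=
  ∀ r, ι (KDeriv C r) = δ (ι r)

/-- Application of an operator to a local series solution via the expansion `ι`. -/
def localApply (δ : HahnSeries ℚ C → HahnSeries ℚ C)
    (ι : RatFunc C →+* HahnSeries ℚ C) (L : DOp C) (f : HahnSeries ℚ C) : HahnSeries ℚ C :=
  L.sum fun i a => ι a * δ^[i] f

/-- A series is integral if it has no pole, i.e. all exponents are ≥ 0. -/
def IntegralSeries (f : HahnSeries ℚ C) : Prop := ∀ γ < (0 : ℚ), f.coeff γ = 0

/-- `[P]_L` is completely integral: at every point of `C ∪ {∞}` and every local series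
    solution `f` of `L` there, `P·f` has no pole. -/
def CompletelyIntegral (L P : DOp C) : Prop :=
  ∀ δ ∈ ({hderiv C, dinf C} : Set (HahnSeries ℚ C → HahnSeries ℚ C)),
    ∀ ι : RatFunc C →+* HahnSeries ℚ C, IsExpansion C δ ι →
      ∀ f : HahnSeries ℚ C, localApply C δ ι L f = 0 →
        IntegralSeries C (localApply C δ ι P f)

/-- A pseudoconstant of `L`: a completely integral element of `K[D]/⟨L⟩` that is not
    a constant. -/
def IsPseudoconstant (L P : DOp C) : Prop :=
  CompletelyIntegral C L P ∧ ¬ IsConstantClass C L P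

def HasPseudoconstant (L : DOp C) : Prop := ∃ P : DOp C, IsPseudoconstant C L P

/-- `S` is the `s`-th symmetric power of `L`: the monic operator of minimal order
    annihilating all products of `s` solutions of `L`. -/
def IsSymPow (L S : DOp C) (s : ℕ) : Prop :=
  S.Monic ∧
  (∀ F : DiffExt C, ∀ f : Fin s → F.carrier,
      (∀ i, F.apply C L (f i) = 0) → F.apply C S (∏ i, f i) = 0) ∧
  (∀ S' : DOp C, S'.Monic →
      (∀ F : DiffExt C, ∀ f : Fin s → F.carrier,
        (∀ i, F.apply C L (f i) = 0) → F.apply C S' (∏ i, f i) = 0) →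
      S.natDegree ≤ S'.natDegree)

/-- `L` has only algebraic solutions: there is an algebraic differential extension of `K`
    in which the solution space of `L` has dimension `ord L`. -/
def AllAlgebraic (L : DOp C) : Prop :=
  ∃ F : DiffExt C, Algebra.IsAlgebraic (RatFunc C) F.carrier ∧
    ∃ b : Fin L.natDegree → F.carrier,
      (∀ i, F.apply C L (b i) = 0) ∧ LinearIndependent C b

theorem kderiv_eq (p s : Polynomial C) (hs : s ≠ 0) :
    KDeriv C (algebraMap (Polynomial C) (RatFunc C) p / algebraMap _ _ s)
      = (algebraMap (Polynomial C) (RatFunc C) (derivative p) * algebraMap _ _ s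
          - algebraMap _ _ p * algebraMap _ _ (derivative s))
        / (algebraMap (Polynomial C) (RatFunc C) s) ^ 2 := by
  set r : RatFunc C := algebraMap (Polynomial C) (RatFunc C) p / algebraMap _ _ s with hr
  have hd : r.denom ≠ 0 := r.denom_ne_zero
  have hds : algebraMap (Polynomial C) (RatFunc C) s ≠ 0 := RatFunc.algebraMap_ne_zero hs
  have hdd : algebraMap (Polynomial C) (RatFunc C) r.denom ≠ 0 := RatFunc.algebraMap_ne_zero hd
  have hcross : p * r.denom = r.num * s := by
    have h1 : algebraMap (Polynomial C) (RatFunc C) p / algebraMap _ _ s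
        = algebraMap (Polynomial C) (RatFunc C) r.num / algebraMap _ _ r.denom := by
      rw [r.num_div_denom]
    rw [div_eq_div_iff hds hdd] at h1
    apply IsFractionRing.injective (Polynomial C) (RatFunc C)
    rw [map_mul, map_mul]; linear_combination h1
  have hcross' : derivative p * r.denom + p * derivative r.denom
      = derivative r.num * s + r.num * derivative s := by
    have := congrArg derivative hcross
    simpa [derivative_mul] using this
  have e1 := congrArg (algebraMap (Polynomial C) (RatFunc C)) hcross
  have e2 := congrArg (algebraMap (Polynomial C) (RatFunc C)) hcross'
  simp only [map_mul, map_add] at e1 e2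
  rw [KDeriv]
  rw [div_eq_div_iff (pow_ne_zero 2 hdd) (pow_ne_zero 2 hds)]
  set N := algebraMap (Polynomial C) (RatFunc C) r.num
  set D := algebraMap (Polynomial C) (RatFunc C) r.denom
  set Np := algebraMap (Polynomial C) (RatFunc C) (derivative r.num)
  set Dp := algebraMap (Polynomial C) (RatFunc C) (derivative r.denom)
  set Pm := algebraMap (Polynomial C) (RatFunc C) p
  set Sm := algebraMap (Polynomial C) (RatFunc C) s
  set Pp := algebraMap (Polynomial C) (RatFunc C) (derivative p)
  set Sp := algebraMap (Polynomial C) (RatFunc C) (derivative s)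
  -- goal: (Np * D - N * Dp) * Sm^2 = (Pp * Sm - Pm * Sp) * D^2
  linear_combination (Dp * Sm + Sp * D) * e1 - (Sm * D) * e2

theorem kderiv_zero : KDeriv C 0 = 0 := by
  simp [KDeriv]

theorem kderiv_add (a b : RatFunc C) : KDeriv C (a + b) = KDeriv C a + KDeriv C b := by
  have ha := a.num_div_denom
  have hb := b.num_div_denom
  have hda : algebraMap (Polynomial C) (RatFunc C) a.denom ≠ 0 :=
    RatFunc.algebraMap_ne_zero a.denom_ne_zero
  have hdb : algebraMap (Polynomial C) (RatFunc C) b.denom ≠ 0 :=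
    RatFunc.algebraMap_ne_zero b.denom_ne_zero
  rw [← ha, ← hb, div_add_div _ _ hda hdb, ← map_mul, ← map_mul, ← map_mul, ← map_add,
    kderiv_eq C _ _ (mul_ne_zero a.denom_ne_zero b.denom_ne_zero),
    kderiv_eq C _ _ a.denom_ne_zero, kderiv_eq C _ _ b.denom_ne_zero]
  simp only [derivative_add, derivative_mul, map_add, map_mul]
  field_simp
  ring

theorem kderiv_mul (a b : RatFunc C) : KDeriv C (a * b) = a * KDeriv C b + KDeriv C a * b := by
  have ha := a.num_div_denom
  have hb := b.num_div_denom
  have hda : algebraMap (Polynomial C) (RatFunc C) a.denom ≠ 0 :=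
    RatFunc.algebraMap_ne_zero a.denom_ne_zero
  have hdb : algebraMap (Polynomial C) (RatFunc C) b.denom ≠ 0 :=
    RatFunc.algebraMap_ne_zero b.denom_ne_zero
  rw [← ha, ← hb, div_mul_div_comm, ← map_mul, ← map_mul,
    kderiv_eq C _ _ (mul_ne_zero a.denom_ne_zero b.denom_ne_zero),
    kderiv_eq C _ _ a.denom_ne_zero, kderiv_eq C _ _ b.denom_ne_zero]
  have hna := div_mul_cancel₀ (algebraMap (Polynomial C) (RatFunc C) a.num) hda
  have hnb := div_mul_cancel₀ (algebraMap (Polynomial C) (RatFunc C) b.num) hdb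
  rw [ha] at hna
  rw [hb] at hnb
  simp only [derivative_mul, map_add, map_mul]
  field_simp
  ring

theorem kderiv_iter_add (n : ℕ) (a b : RatFunc C) :
    (KDeriv C)^[n] (a + b) = (KDeriv C)^[n] a + (KDeriv C)^[n] b := by
  induction n generalizing a b with
  | zero => simp
  | succ n ih => rw [Function.iterate_succ_apply, kderiv_add, Function.iterate_succ_apply,
      Function.iterate_succ_apply, ih]

theorem kderiv_iter_zero (n : ℕ) : (KDeriv C)^[n] 0 = 0 :=
  Function.iterate_fixed (kderiv_zero C) n

theorem Dmul_add (P Q : DOp C) : Dmul C (P + Q) = Dmul C P + Dmul C Q := by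
  unfold Dmul
  rw [Polynomial.sum_add_index _ _ _ (fun i => by simp [kderiv_zero])
    (fun i a b => by rw [kderiv_add, map_add]; ring)]
  ring

theorem Dmul_monomial (n : ℕ) (a : RatFunc C) :
    Dmul C (monomial n a) = monomial (n+1) a + monomial n (KDeriv C a) := by
  unfold Dmul
  rw [Polynomial.sum_monomial_index _ _ (by simp [kderiv_zero])]
  simp [X_mul_monomial, Polynomial.C_mul_X_pow_eq_monomial]

theorem Dmul_zero' : Dmul C 0 = 0 := by
  unfold Dmul; simp [Polynomial.sum_zero_index]

theorem KApply_add (P Q : DOp C) (q : RatFunc C) :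
    KApply C (P + Q) q = KApply C P q + KApply C Q q := by
  unfold KApply
  exact Polynomial.sum_add_index _ _ _ (fun i => by simp) (fun i a b => by ring)

theorem KApply_monomial (n : ℕ) (a : RatFunc C) (q : RatFunc C) :
    KApply C (monomial n a) q = a * (KDeriv C)^[n] q := by
  unfold KApply
  exact Polynomial.sum_monomial_index _ _ (by simp)

theorem KApply_Dmul (P : DOp C) (q : RatFunc C) :
    KApply C (Dmul C P) q = KDeriv C (KApply C P q) := by
  induction P using Polynomial.induction_on' with
  | add p r hp hr => rw [Dmul_add, KApply_add, hp, hr, KApply_add, kderiv_add]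
  | monomial n a =>
    rw [Dmul_monomial, KApply_add, KApply_monomial, KApply_monomial, KApply_monomial,
      kderiv_mul, Function.iterate_succ_apply']

theorem Dmul_iter_zero (k : ℕ) : (Dmul C)^[k] 0 = 0 :=
  Function.iterate_fixed (Dmul_zero' C) k

theorem KApply_DmulIter (k : ℕ) (P : DOp C) (q : RatFunc C) :
    KApply C ((Dmul C)^[k] P) q = (KDeriv C)^[k] (KApply C P q) := by
  induction k generalizing P with
  | zero => simp
  | succ k ih =>
    rw [Function.iterate_succ_apply', KApply_Dmul, ih]
    exact (Function.iterate_succ_apply' _ _ _).symm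

theorem KApply_Cmul (a : RatFunc C) (M : DOp C) (q : RatFunc C) :
    KApply C (Polynomial.C a * M) q = a * KApply C M q := by
  induction M using Polynomial.induction_on' with
  | add p r hp hr => rw [mul_add, KApply_add, hp, hr, KApply_add, mul_add]
  | monomial n b => rw [Polynomial.C_mul_monomial, KApply_monomial, KApply_monomial, mul_assoc]

def Phi (M : DOp C) : RatFunc C := M.sum fun i a => (-1 : RatFunc C)^i * (KDeriv C)^[i] a

theorem Phi_add (P Q : DOp C) : Phi C (P + Q) = Phi C P + Phi C Q := by
  unfold Phi
  exact Polynomial.sum_add_index _ _ _ (fun i => by simp [kderiv_iter_zero])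
    (fun i a b => by rw [kderiv_iter_add, mul_add])

theorem Phi_monomial (n : ℕ) (a : RatFunc C) :
    Phi C (monomial n a) = (-1 : RatFunc C)^n * (KDeriv C)^[n] a := by
  unfold Phi
  exact Polynomial.sum_monomial_index _ _ (by simp [kderiv_iter_zero])

theorem Phi_Dmul (P : DOp C) : Phi C (Dmul C P) = 0 := by
  induction P using Polynomial.induction_on' with
  | add p r hp hr => rw [Dmul_add, Phi_add, hp, hr, add_zero]
  | monomial n a =>
    rw [Dmul_monomial, Phi_add, Phi_monomial, Phi_monomial,
      ← Function.iterate_succ_apply, pow_succ]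
    ring

theorem Dmul_iter_add (k : ℕ) (P Q : DOp C) :
    (Dmul C)^[k] (P + Q) = (Dmul C)^[k] P + (Dmul C)^[k] Q := by
  induction k generalizing P Q with
  | zero => simp
  | succ k ih => rw [Function.iterate_succ_apply, Dmul_add, ih,
      Function.iterate_succ_apply, Function.iterate_succ_apply]

theorem adjoint_add (P Q : DOp C) : adjoint C (P + Q) = adjoint C P + adjoint C Q := by
  unfold adjoint
  exact Polynomial.sum_add_index _ _ _
    (fun i => by rw [map_zero, Dmul_iter_zero, mul_zero])
    (fun i a b => by rw [map_add, Dmul_iter_add, mul_add])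

theorem adjoint_monomial (n : ℕ) (a : RatFunc C) :
    adjoint C (monomial n a) = (-1)^n * (Dmul C)^[n] (Polynomial.C a) := by
  unfold adjoint
  exact Polynomial.sum_monomial_index _ _ (by rw [map_zero, Dmul_iter_zero, mul_zero])

theorem KApply_adjoint_eq_Phi (L : DOp C) (q : RatFunc C) :
    KApply C (adjoint C L) q = Phi C (Polynomial.C q * L) := by
  induction L using Polynomial.induction_on' with
  | add p r hp hr => rw [adjoint_add, KApply_add, hp, hr, mul_add, Phi_add]
  | monomial n a =>
    have hneg : ((-1 : DOp C))^n = Polynomial.C ((-1 : RatFunc C)^n) := by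
      rw [map_pow, map_neg, map_one]
    rw [adjoint_monomial, hneg, KApply_Cmul, KApply_DmulIter,
      Polynomial.C_mul_monomial, Phi_monomial]
    have : KApply C (Polynomial.C a) q = a * q := by
      rw [← Polynomial.monomial_zero_left, KApply_monomial, Function.iterate_zero_apply]
    rw [this, mul_comm a q]

/-- If `DP = qL` with `q ∈ K`, then `q` is a rational solution of the adjoint:
`L*·q = 0`. -/
theorem adjoint_rational_solution (L P : DOp C) (q : RatFunc C)
    (h : Dmul C P = opMul C (Polynomial.C q) L) :
    KApply C (adjoint C L) q = 0 := by
  have hop : opMul C (Polynomial.C q) L = Polynomial.C q * L := by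
    unfold opMul
    rw [Polynomial.sum_C_index (by rw [map_zero, zero_mul]), Function.iterate_zero_apply]
  rw [KApply_adjoint_eq_Phi, ← hop, ← h, Phi_Dmul]

end
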